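/- (Schoenberg) A symmetric function γ : ℝ^d → ℝ with γ(0) = 0 is conditionally negative definite if and only if for every t > 0 the function ξ ↦ exp(−t·γ(ξ)) is positive definite. -/

import Mathlib

open Finset Real

def IsVariogram {d : ℕ} (γ : (Fin d → ℝ) → ℝ) : Prop :=
  γ 0 = 0 ∧ (∀ ξ, γ (-ξ) = γ ξ) ∧
  ∀ (n : ℕ) (x : Fin n → (Fin d → ℝ)) (c : Fin n → ℝ),
    (∑ i, c i) = 0 → (∑ i, ∑ j, c i * c j * γ (x i - x j)) ≤ 0

def IsPosDef {d : ℕ} (f : (Fin d → ℝ) → ℝ) : Prop :=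
  ∀ (n : ℕ) (x : Fin n → (Fin d → ℝ)) (c : Fin n → ℝ),
    0 ≤ ∑ i, ∑ j, c i * c j * f (x i - x j)

def IsPosDef1 (f : ℝ → ℝ) : Prop :=
  ∀ (n : ℕ) (x : Fin n → ℝ) (c : Fin n → ℝ),
    0 ≤ ∑ i, ∑ j, c i * c j * f (x i - x j)

def IsVariogram1 (γ : ℝ → ℝ) : Prop :=
  γ 0 = 0 ∧ (∀ x, γ (-x) = γ x) ∧
  ∀ (n : ℕ) (x : Fin n → ℝ) (c : Fin n → ℝ),
    (∑ i, c i) = 0 → (∑ i, ∑ j, c i * c j * γ (x i - x j)) ≤ 0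

noncomputable def ind {d : ℕ} : (Fin d → ℝ) → ℝ := fun ξ => if ξ = 0 then 0 else 1

/-- Schur product theorem at the level of quadratic forms. -/
lemma qf_schur {n : ℕ} (K L : Fin n → Fin n → ℝ) (hLsym : ∀ i j, L i j = L j i)
    (hK : ∀ c : Fin n → ℝ, 0 ≤ ∑ i, ∑ j, c i * c j * K i j)
    (hL : ∀ c : Fin n → ℝ, 0 ≤ ∑ i, ∑ j, c i * c j * L i j)
    (c : Fin n → ℝ) : 0 ≤ ∑ i, ∑ j, c i * c j * (K i j * L i j) := by
  have hA : (Matrix.of L).PosSemidef := by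
    constructor
    · ext i j
      simp [Matrix.conjTranspose_apply, hLsym i j]
    · intro v
      have := hL v
      simpa [dotProduct, Matrix.mulVec, Finsupp.sum_fintype, Finset.mul_sum, mul_assoc, mul_comm,
        mul_left_comm] using this
  obtain ⟨W, hW⟩ : ∃ W : Matrix (Fin n) (Fin n) ℝ, Matrix.of L = star W * W := by
    open scoped MatrixOrder in exact CStarAlgebra.nonneg_iff_eq_star_mul_self.mp hA.nonneg
  have hLdec : ∀ i j, L i j = ∑ k, W k i * W k j := by
    intro i j
    have := congrFun (congrFun hW i) j
    simpa [Matrix.mul_apply, Matrix.conjTranspose_apply, Matrix.star_eq_conjTranspose] using this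
  calc ∑ i, ∑ j, c i * c j * (K i j * L i j)
      = ∑ i, ∑ j, ∑ k, (c i * W k i) * (c j * W k j) * K i j := by
        refine sum_congr rfl fun i _ => sum_congr rfl fun j _ => ?_
        rw [hLdec i j, Finset.mul_sum, Finset.mul_sum]
        exact sum_congr rfl fun k _ => by ring
    _ = ∑ k, ∑ i, ∑ j, (c i * W k i) * (c j * W k j) * K i j := by
        rw [show (∑ i, ∑ j, ∑ k, (c i * W k i) * (c j * W k j) * K i j)
            = ∑ i, ∑ k, ∑ j, (c i * W k i) * (c j * W k j) * K i j
          from sum_congr rfl fun i _ => Finset.sum_comm, Finset.sum_comm]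
    _ ≥ 0 := sum_nonneg fun k _ => hK fun i => c i * W k i

lemma qf_factor {n : ℕ} (c : Fin n → ℝ) (f : Fin n → ℝ) :
    ∑ i, ∑ j, c i * c j * f i = (∑ i, c i * f i) * (∑ j, c j) := by
  rw [Finset.sum_mul]
  refine sum_congr rfl fun i _ => ?_
  rw [Finset.mul_sum]
  exact sum_congr rfl fun j _ => by ring

lemma qf_factor' {n : ℕ} (c : Fin n → ℝ) (f : Fin n → ℝ) :
    ∑ i, ∑ j, c i * c j * f j = (∑ i, c i) * (∑ j, c j * f j) := by
  rw [Finset.sum_mul]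
  refine sum_congr rfl fun i _ => ?_
  rw [Finset.mul_sum]
  exact sum_congr rfl fun j _ => by ring

/-- The kernel ψ(i,j) = γ(xᵢ) + γ(xⱼ) - γ(xᵢ - xⱼ) is positive semidefinite. -/
lemma psi_psd {d n : ℕ} (γ : (Fin d → ℝ) → ℝ) (hsym : ∀ ξ, γ (-ξ) = γ ξ) (h0 : γ 0 = 0)
    (hcnd : ∀ (n : ℕ) (x : Fin n → (Fin d → ℝ)) (c : Fin n → ℝ),
      (∑ i, c i) = 0 → (∑ i, ∑ j, c i * c j * γ (x i - x j)) ≤ 0)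
    (x : Fin n → (Fin d → ℝ)) (c : Fin n → ℝ) :
    0 ≤ ∑ i, ∑ j, c i * c j * (γ (x i) + γ (x j) - γ (x i - x j)) := by
  set s : ℝ := ∑ i, c i with hs
  set T : ℝ := ∑ i, c i * γ (x i) with hT
  have hE := hcnd (n+1) (Fin.cons 0 x) (Fin.cons (-s) c) (by rw [Fin.sum_cons, hs]; ring)
  simp only [Fin.sum_univ_succ, Fin.cons_zero, Fin.cons_succ, sub_self, h0, mul_zero,
    zero_add, sub_zero, zero_sub, hsym] at hE
  rw [Finset.sum_add_distrib] at hE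
  have e1 : ∑ j : Fin n, -s * c j * γ (x j) = -(s * T) := by
    have : (∑ j : Fin n, -s * c j * γ (x j)) = ∑ j : Fin n, -(s * (c j * γ (x j))) :=
      sum_congr rfl fun j _ => by ring
    rw [this, Finset.sum_neg_distrib, ← Finset.mul_sum, ← hT]
  have e2 : ∑ i : Fin n, c i * -s * γ (x i) = -(s * T) := by
    have : (∑ i : Fin n, c i * -s * γ (x i)) = ∑ i : Fin n, -(s * (c i * γ (x i))) :=
      sum_congr rfl fun j _ => by ring
    rw [this, Finset.sum_neg_distrib, ← Finset.mul_sum, ← hT]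
  rw [e1, e2] at hE
  have hgoal : ∑ i, ∑ j, c i * c j * (γ (x i) + γ (x j) - γ (x i - x j))
      = s * T + s * T - ∑ i, ∑ j, c i * c j * γ (x i - x j) := by
    have e : ∀ i j : Fin n, c i * c j * (γ (x i) + γ (x j) - γ (x i - x j))
        = c i * c j * γ (x i) + c i * c j * γ (x j) - c i * c j * γ (x i - x j) := by
      intro i j; ring
    simp only [e, Finset.sum_add_distrib, Finset.sum_sub_distrib]
    rw [qf_factor c (fun i => γ (x i)), qf_factor' c (fun i => γ (x i))]
    rw [← hs, ← hT]
    ring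
  rw [hgoal]
  linarith

theorem stmt7 {d : ℕ} (γ : (Fin d → ℝ) → ℝ) (hsym : ∀ ξ, γ (-ξ) = γ ξ)
    (h0 : γ 0 = 0) :
    (∀ (n : ℕ) (x : Fin n → (Fin d → ℝ)) (c : Fin n → ℝ),
      (∑ i, c i) = 0 → (∑ i, ∑ j, c i * c j * γ (x i - x j)) ≤ 0) ↔
    (∀ t : ℝ, 0 < t → IsPosDef (fun ξ => Real.exp (-t * γ ξ))) := by
  constructor
  · -- forward: conditionally negative definite ⇒ exp(-tγ) positive definite
    intro hcnd t ht n x c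
    simp only
    set ψ : Fin n → Fin n → ℝ := fun i j => γ (x i) + γ (x j) - γ (x i - x j) with hψ
    have hψsym : ∀ i j, ψ i j = ψ j i := by
      intro i j
      simp only [hψ]
      rw [show x j - x i = -(x i - x j) by ring, hsym]
      ring
    have hpsd : ∀ c : Fin n → ℝ, 0 ≤ ∑ i, ∑ j, c i * c j * ψ i j :=
      fun c => psi_psd γ hsym h0 hcnd x c
    have hpow : ∀ m : ℕ, ∀ c : Fin n → ℝ, 0 ≤ ∑ i, ∑ j, c i * c j * (ψ i j) ^ m := by
      intro m
      induction m with
      | zero =>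
        intro c
        simp only [pow_zero, mul_one]
        rw [← Fintype.sum_mul_sum (fun i => c i) (fun j => c j)]
        exact mul_self_nonneg _
      | succ m ih =>
        intro c
        have := qf_schur (fun i j => (ψ i j) ^ m) ψ hψsym ih hpsd c
        simpa [pow_succ] using this
    have hexp : ∀ c : Fin n → ℝ, 0 ≤ ∑ i, ∑ j, c i * c j * Real.exp (t * ψ i j) := by
      intro c
      have hrw : ∀ i j, Real.exp (t * ψ i j) = ∑' m : ℕ, (t * ψ i j) ^ m / m.factorial := by
        intro i j
        rw [Real.exp_eq_exp_ℝ, NormedSpace.exp_eq_tsum_div]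
      have hsum : ∀ i j : Fin n,
          Summable (fun m : ℕ => c i * c j * ((t * ψ i j) ^ m / m.factorial)) :=
        fun i j => (Real.summable_pow_div_factorial _).mul_left _
      calc (0:ℝ) ≤ ∑' m : ℕ, ∑ i, ∑ j, c i * c j * ((t * ψ i j) ^ m / m.factorial) := by
            refine tsum_nonneg fun m => ?_
            have key : ∑ i, ∑ j, c i * c j * ((t * ψ i j) ^ m / m.factorial)
                = (t ^ m / m.factorial) * ∑ i, ∑ j, c i * c j * (ψ i j) ^ m := by
              rw [Finset.mul_sum]
              refine sum_congr rfl fun i _ => ?_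
              rw [Finset.mul_sum]
              refine sum_congr rfl fun j _ => ?_
              rw [mul_pow]
              ring
            rw [key]
            exact mul_nonneg (by positivity) (hpow m c)
        _ = ∑ i, ∑ j, ∑' m : ℕ, c i * c j * ((t * ψ i j) ^ m / m.factorial) := by
            rw [Summable.tsum_finsetSum (fun i _ => summable_sum (fun j _ => hsum i j))]
            exact sum_congr rfl fun i _ => Summable.tsum_finsetSum fun j _ => hsum i j
        _ = ∑ i, ∑ j, c i * c j * Real.exp (t * ψ i j) := by
            refine sum_congr rfl fun i _ => sum_congr rfl fun j _ => ?_
            rw [hrw i j, tsum_mul_left]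
    have hfactor : ∀ i j, Real.exp (-t * γ (x i - x j))
        = (Real.exp (-t * γ (x i))) * (Real.exp (-t * γ (x j))) * Real.exp (t * ψ i j) := by
      intro i j
      rw [← Real.exp_add, ← Real.exp_add]
      congr 1
      simp only [hψ]
      ring
    have := hexp (fun i => c i * Real.exp (-t * γ (x i)))
    calc (0:ℝ) ≤ ∑ i, ∑ j, (c i * Real.exp (-t * γ (x i))) * (c j * Real.exp (-t * γ (x j)))
          * Real.exp (t * ψ i j) := this
      _ = ∑ i, ∑ j, c i * c j * Real.exp (-t * γ (x i - x j)) := by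
          refine sum_congr rfl fun i _ => sum_congr rfl fun j _ => ?_
          rw [hfactor i j]
          ring
  · -- backward
    intro h n x c hc
    set Q : ℝ := ∑ i, ∑ j, c i * c j * γ (x i - x j) with hQ
    set g : ℝ → ℝ := fun t => ∑ i, ∑ j, c i * c j * Real.exp (-t * γ (x i - x j)) with hg
    have hg0 : g 0 = 0 := by
      simp only [hg, neg_zero, zero_mul, Real.exp_zero, mul_one]
      rw [← Fintype.sum_mul_sum (fun i => c i) (fun j => c j), hc, mul_zero]
    have hgpos : ∀ t : ℝ, 0 < t → 0 ≤ g t := fun t ht => h t ht n x c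
    have hderiv : HasDerivAt g (-Q) 0 := by
      have hQ' : -Q = ∑ i, ∑ j, c i * c j * (-γ (x i - x j)) := by
        rw [hQ, ← Finset.sum_neg_distrib]
        refine sum_congr rfl fun i _ => ?_
        rw [← Finset.sum_neg_distrib]
        exact sum_congr rfl fun j _ => by ring
      rw [hQ']
      refine HasDerivAt.fun_sum fun i _ => HasDerivAt.fun_sum fun j _ => ?_
      have h1 : HasDerivAt (fun s : ℝ => -s * γ (x i - x j)) (-γ (x i - x j)) 0 := by
        simpa using ((hasDerivAt_id (0:ℝ)).neg.mul_const (γ (x i - x j)))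
      have h2 := h1.exp
      simp only [neg_zero, zero_mul, Real.exp_zero, one_mul] at h2
      simpa using h2.const_mul (c i * c j)
    rw [hasDerivAt_iff_tendsto_slope] at hderiv
    have hT : Filter.Tendsto (slope g 0) (nhdsWithin 0 (Set.Ioi 0)) (nhds (-Q)) :=
      hderiv.mono_left (nhdsWithin_mono 0 (fun y hy => ne_of_gt hy))
    have hnn : ∀ᶠ s in nhdsWithin (0:ℝ) (Set.Ioi 0), 0 ≤ slope g 0 s := by
      filter_upwards [self_mem_nhdsWithin] with s hs
      have hs' : (0:ℝ) < s := hs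
      rw [slope_def_field, hg0]
      simp only [sub_zero]
      exact div_nonneg (hgpos s hs') hs'.le
    have : (0:ℝ) ≤ -Q := ge_of_tendsto hT hnn
    linarith
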